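/- Let c ∈ [0,σ]^d and k = (k₁,…,k_d) ∈ ℕ₀^d. Let Y be a random variable distributed as X ~ N(c, σ²·I) conditioned on X ∈ Q := [k₁σ,(k₁+1)σ] × ⋯ × [k_dσ,(k_d+1)σ]. Then the probability density function of Y is bounded above by exp(‖k‖₁ + (3/2)d) · σ^{-d} on Q. -/

import Mathlib

open MeasureTheory ProbabilityTheory
open scoped ENNReal NNReal

lemma lintegral_pi_prod : ∀ (n : ℕ) (μ : Fin n → Measure ℝ), (∀ i, SigmaFinite (μ i)) →
    ∀ (f : Fin n → ℝ → ℝ≥0∞), (∀ i, Measurable (f i)) →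
    ∫⁻ x, ∏ i, f i (x i) ∂(Measure.pi μ) = ∏ i, ∫⁻ t, f i t ∂(μ i)
  | 0, μ, _, f, hf => by simp
  | (n+1), μ, hsf, f, hf => by
    haveI := hsf
    have hmeas : Measurable fun x : Fin (n+1) → ℝ => ∏ i, f i (x i) :=
      Finset.measurable_prod _ fun i _ => (hf i).comp (measurable_pi_apply i)
    rw [← ((measurePreserving_piFinSuccAbove μ 0).symm).lintegral_comp hmeas]
    have key : ∀ y : ℝ × (Fin n → ℝ),
        (∏ i, f i (((MeasurableEquiv.piFinSuccAbove (fun _ : Fin (n+1) => ℝ) 0).symm y) i))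
          = f 0 y.1 * ∏ j : Fin n, f ((0 : Fin (n+1)).succAbove j) (y.2 j) := by
      intro y
      rw [Fin.prod_univ_succAbove _ 0]
      simp [MeasurableEquiv.piFinSuccAbove_symm_apply]
    simp_rw [key]
    rw [lintegral_prod_mul (f := f 0)
      (g := fun z : Fin n → ℝ => ∏ j : Fin n, f ((0 : Fin (n+1)).succAbove j) (z j))
      ((hf 0).aemeasurable)
      ((Finset.measurable_prod _ fun j _ =>
        (hf _).comp (measurable_pi_apply j)).aemeasurable)]
    rw [lintegral_pi_prod n (fun j => μ ((0 : Fin (n+1)).succAbove j))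
      (fun j => inferInstance) (fun j => f ((0 : Fin (n+1)).succAbove j)) (fun j => hf _)]
    rw [Fin.prod_univ_succAbove (fun i => ∫⁻ t, f i t ∂(μ i)) 0]

lemma pi_withDensity' {n : ℕ} (μ : Fin n → Measure ℝ) [∀ i, SigmaFinite (μ i)]
    (f : Fin n → ℝ → ℝ≥0∞) (hf : ∀ i, Measurable (f i))
    [∀ i, SigmaFinite ((μ i).withDensity (f i))] :
    Measure.pi (fun i => (μ i).withDensity (f i))
      = (Measure.pi μ).withDensity (fun x => ∏ i, f i (x i)) := by
  refine Measure.pi_eq fun s hs => ?_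
  rw [withDensity_apply _ (MeasurableSet.univ_pi hs),
    ← lintegral_indicator (MeasurableSet.univ_pi hs)]
  have key : ∀ x : Fin n → ℝ, (Set.pi Set.univ s).indicator (fun x => ∏ i, f i (x i)) x
      = ∏ i, (s i).indicator (f i) (x i) := by
    intro x
    by_cases hx : x ∈ Set.pi Set.univ s
    · rw [Set.indicator_of_mem hx]
      exact Finset.prod_congr rfl fun i _ =>
        (Set.indicator_of_mem (hx i (Set.mem_univ i)) _).symm
    · rw [Set.indicator_of_notMem hx]
      rw [Set.mem_univ_pi] at hx
      push_neg at hx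
      obtain ⟨i, hi⟩ := hx
      exact (Finset.prod_eq_zero (Finset.mem_univ i) (Set.indicator_of_notMem hi _)).symm
  simp_rw [key]
  rw [lintegral_pi_prod n μ inferInstance _ (fun i => (hf i).indicator (hs i))]
  exact Finset.prod_congr rfl fun i _ => by
    rw [lintegral_indicator (hs i), withDensity_apply _ (hs i)]

lemma oneDim_bound {σ : ℝ} (hσ : 0 < σ) {c : ℝ} (hc : c ∈ Set.Icc (0:ℝ) σ) (k : ℕ) {x : ℝ}
    (hx : x ∈ Set.Icc ((k:ℝ) * σ) ((k + 1 : ℝ) * σ)) :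
    gaussianPDF c ((σ^2).toNNReal) x
      ≤ ENNReal.ofReal (Real.exp ((k:ℝ) + 3/2) / σ)
        * gaussianReal c ((σ^2).toNNReal) (Set.Icc ((k:ℝ) * σ) ((k + 1 : ℝ) * σ)) := by
  have hv : ((σ^2).toNNReal) ≠ 0 := by
    simp only [ne_eq, Real.toNNReal_eq_zero, not_le]
    positivity
  have hvr : (((σ^2).toNNReal : ℝ≥0) : ℝ) = σ^2 := Real.coe_toNNReal _ (sq_nonneg σ)
  set v : ℝ≥0 := (σ^2).toNNReal with hvdef
  -- pointwise comparison on the interval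
  have key : ∀ y ∈ Set.Icc ((k:ℝ) * σ) ((k + 1 : ℝ) * σ),
      Real.exp (-((k:ℝ) + 1)) * gaussianPDFReal c v x ≤ gaussianPDFReal c v y := by
    intro y hy
    rw [gaussianPDFReal, gaussianPDFReal]
    rw [mul_comm (Real.exp (-((k:ℝ) + 1))) _, mul_assoc, ← Real.exp_add]
    have hC : (0:ℝ) ≤ (√(2 * Real.pi * v))⁻¹ := by positivity
    refine mul_le_mul_of_nonneg_left (Real.exp_le_exp.mpr ?_) hC
    have h2σ : (0:ℝ) < 2 * σ^2 := by positivity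
    have hk0 : (0:ℝ) ≤ (k:ℝ)*σ := by positivity
    have hkσ : ((k:ℝ)+1)*σ = (k:ℝ)*σ + σ := by ring
    have ha1 : (0:ℝ) ≤ σ - (y - x) := by linarith [hy.2, hx.1, hkσ]
    have ha2 : (0:ℝ) ≤ σ + (y - x) := by linarith [hy.1, hx.2, hkσ]
    have hb1 : (0:ℝ) ≤ 2*((k:ℝ)+1)*σ + (y + x - 2*c) := by nlinarith [hy.1, hx.1, hc.2]
    have hb2 : (0:ℝ) ≤ 2*((k:ℝ)+1)*σ - (y + x - 2*c) := by nlinarith [hy.2, hx.2, hc.1]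
    have h2 : (y - c)^2 ≤ (x - c)^2 + 2*((k:ℝ)+1)*σ^2 := by
      nlinarith [mul_nonneg ha1 hb1, mul_nonneg ha2 hb2]
    rw [hvr]
    have h4 : (y - c)^2 / (2*σ^2) ≤ ((x - c)^2 + 2*((k:ℝ)+1)*σ^2) / (2*σ^2) := by gcongr
    have h5 : ((x - c)^2 + 2*((k:ℝ)+1)*σ^2) / (2*σ^2) = (x - c)^2/(2*σ^2) + ((k:ℝ)+1) := by
      field_simp
    rw [h5] at h4
    have : -(y-c)^2 / (2*σ^2) = -((y-c)^2 / (2*σ^2)) := by ring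
    rw [this]
    have : -(x-c)^2 / (2*σ^2) + -((k:ℝ)+1) = -((x-c)^2 / (2*σ^2) + ((k:ℝ)+1)) := by ring
    rw [this]
    exact neg_le_neg h4
  -- integral lower bound
  have hvol : volume (Set.Icc ((k:ℝ) * σ) ((k + 1 : ℝ) * σ)) = ENNReal.ofReal σ := by
    rw [Real.volume_Icc]; congr 1; ring
  have hInt : Real.exp (-((k:ℝ) + 1)) * gaussianPDFReal c v x * σ
      ≤ ∫ y in Set.Icc ((k:ℝ) * σ) ((k + 1 : ℝ) * σ), gaussianPDFReal c v y := by
    have h1 : ∫ _y in Set.Icc ((k:ℝ) * σ) ((k + 1 : ℝ) * σ),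
        (Real.exp (-((k:ℝ) + 1)) * gaussianPDFReal c v x)
        = Real.exp (-((k:ℝ) + 1)) * gaussianPDFReal c v x * σ := by
      rw [setIntegral_const, measureReal_def, hvol, ENNReal.toReal_ofReal hσ.le, smul_eq_mul, mul_comm]
    rw [← h1]
    refine setIntegral_mono_on (integrableOn_const (by rw [hvol]; exact ENNReal.ofReal_ne_top))
      ((integrable_gaussianPDFReal c v).integrableOn) measurableSet_Icc key
  -- assemble
  rw [gaussianReal_apply_eq_integral _ hv, ← ENNReal.ofReal_mul (by positivity)]
  rw [gaussianPDF]
  refine ENNReal.ofReal_le_ofReal ?_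
  have hexp : Real.exp ((k:ℝ) + 3/2) * Real.exp (-((k:ℝ) + 1)) = Real.exp (1/2 : ℝ) := by
    rw [← Real.exp_add]; congr 1; ring
  have h0 : 0 ≤ gaussianPDFReal c v x := gaussianPDFReal_nonneg c v x
  have h6 : Real.exp ((k:ℝ) + 3/2) / σ * (Real.exp (-((k:ℝ) + 1)) * gaussianPDFReal c v x * σ)
      = Real.exp (1/2 : ℝ) * gaussianPDFReal c v x := by
    field_simp
    rw [← hexp]; ring
  calc gaussianPDFReal c v x
      ≤ Real.exp (1/2 : ℝ) * gaussianPDFReal c v x := by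
        nlinarith [Real.one_le_exp (le_of_lt (by norm_num : (0:ℝ) < 1/2))]
    _ = Real.exp ((k:ℝ) + 3/2) / σ * (Real.exp (-((k:ℝ) + 1)) * gaussianPDFReal c v x * σ) := h6.symm
    _ ≤ Real.exp ((k:ℝ) + 3/2) / σ * ∫ y in Set.Icc ((k:ℝ) * σ) ((k + 1 : ℝ) * σ), gaussianPDFReal c v y := by
        refine mul_le_mul_of_nonneg_left hInt (by positivity)

/-- The `d`-dimensional spherical Gaussian measure with mean `m` and standard deviation `σ`
(covariance `σ² · I`), as a measure on Euclidean space. -/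
noncomputable def gaussPi (d : ℕ) (m : EuclideanSpace ℝ (Fin d)) (σ : ℝ) :
    Measure (EuclideanSpace ℝ (Fin d)) :=
  Measure.map (MeasurableEquiv.toLp 2 (Fin d → ℝ))
    (Measure.pi fun i => gaussianReal (m i) ((σ ^ 2).toNNReal))

theorem stmt12 (d : ℕ) (hd : 1 ≤ d) (σ : ℝ) (hσ : 0 < σ)
    (c : EuclideanSpace ℝ (Fin d)) (hc : ∀ i, c i ∈ Set.Icc (0 : ℝ) σ)
    (k : Fin d → ℕ)
    (S : Set (EuclideanSpace ℝ (Fin d))) (hS : MeasurableSet S) :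
    (gaussPi d c σ)[|{x | ∀ i, x i ∈ Set.Icc ((k i : ℝ) * σ) ((k i + 1 : ℝ) * σ)}] S
      ≤ ENNReal.ofReal (Real.exp ((∑ i, (k i : ℝ)) + (3 / 2) * d) / σ ^ d)
          * volume S := by
  classical
  have hv : ((σ^2).toNNReal) ≠ 0 := by
    simp only [ne_eq, Real.toNNReal_eq_zero, not_le]; positivity
  set v : ℝ≥0 := (σ^2).toNNReal with hvdef
  set e := (MeasurableEquiv.toLp 2 (Fin d → ℝ)).symm with he
  set μ : Fin d → Measure ℝ := fun i => gaussianReal (c i) v with hμ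
  set ν : Measure (Fin d → ℝ) := Measure.pi μ with hν
  set Qe : Set (EuclideanSpace ℝ (Fin d)) :=
    {x | ∀ i, x i ∈ Set.Icc ((k i : ℝ) * σ) ((k i + 1 : ℝ) * σ)} with hQe
  set Qp : Set (Fin d → ℝ) :=
    Set.pi Set.univ (fun i => Set.Icc ((k i : ℝ) * σ) ((k i + 1 : ℝ) * σ)) with hQp
  have hQpm : MeasurableSet Qp :=
    MeasurableSet.univ_pi fun i => measurableSet_Icc
  have hpre : ∀ A : Set (EuclideanSpace ℝ (Fin d)), e.symm ⁻¹' A = ⇑e.symm ⁻¹' A := fun _ => rfl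
  have hQpre : e.symm ⁻¹' Qe = Qp := by
    ext y
    simp only [Set.mem_preimage, hQe, Set.mem_setOf_eq, hQp, Set.mem_univ_pi]
    rfl
  have hQem : MeasurableSet Qe := by
    have := e.symm.measurableSet_preimage (s := Qe)
    rw [hQpre] at this
    exact this.mp hQpm
  set T : Set (Fin d → ℝ) := e.symm ⁻¹' S with hT
  have hTm : MeasurableSet T := e.symm.measurable hS
  have hQSpre : e.symm ⁻¹' (Qe ∩ S) = Qp ∩ T := by rw [Set.preimage_inter, hQpre]
  -- conditional probability formula
  rw [cond_apply hQem]
  have hmap : ∀ (A : Set (EuclideanSpace ℝ (Fin d))), MeasurableSet A →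
      gaussPi d c σ A = ν (e.symm ⁻¹' A) := by
    intro A hA
    rw [gaussPi]; exact Measure.map_apply (MeasurableEquiv.toLp 2 (Fin d → ℝ)).measurable hA
  rw [hmap Qe hQem, hmap (Qe ∩ S) (hQem.inter hS), hQpre, hQSpre]
  -- volume identity
  have hvolS : volume T = volume S :=
    (MeasurePreserving.symm _
      (EuclideanSpace.volume_preserving_symm_measurableEquiv_toLp (Fin d))).measure_preimage
      hS.nullMeasurableSet
  -- sigma-finiteness instances
  haveI : ∀ i, SigmaFinite (μ i) := fun i => inferInstance
  haveI hsfwd : ∀ i, SigmaFinite ((volume : Measure ℝ).withDensity (gaussianPDF (c i) v)) := by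
    intro i
    rw [← gaussianReal_of_var_ne_zero _ hv]
    infer_instance
  -- density representation of ν
  have hdens : ν = (volume : Measure (Fin d → ℝ)).withDensity
      (fun x => ∏ i, gaussianPDF (c i) v (x i)) := by
    rw [hν]
    have : μ = fun i => (volume : Measure ℝ).withDensity (gaussianPDF (c i) v) := by
      funext i
      exact gaussianReal_of_var_ne_zero (c i) hv
    rw [this, pi_withDensity' _ _ (fun i => measurable_gaussianPDF _ _), volume_pi]
  -- the product measure of the box
  set P : ℝ≥0∞ := ∏ i, μ i (Set.Icc ((k i : ℝ) * σ) ((k i + 1 : ℝ) * σ)) with hP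
  have hνQ : ν Qp = P := by rw [hν, hQp, Measure.pi_pi]
  have hP0 : P ≠ 0 := by
    rw [hP, Finset.prod_ne_zero_iff]
    intro i _
    intro h0
    have := (gaussianReal_absolutelyContinuous' (c i) hv) h0
    rw [Real.volume_Icc] at this
    have : ((k i : ℝ) + 1) * σ - (k i : ℝ) * σ = σ := by ring
    simp_all [ENNReal.ofReal_eq_zero, not_le]
    linarith
  have hPtop : P ≠ ⊤ := by
    rw [hP]
    exact (ENNReal.prod_lt_top fun i _ => measure_lt_top _ _).ne
  -- constant
  set C : ℝ≥0∞ := ENNReal.ofReal (Real.exp ((∑ i, (k i : ℝ)) + (3 / 2) * d) / σ ^ d) with hC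
  have hCprod : (∏ i : Fin d, ENNReal.ofReal (Real.exp ((k i : ℝ) + 3/2) / σ)) = C := by
    rw [← ENNReal.ofReal_prod_of_nonneg (fun i _ => by positivity)]
    congr 1
    rw [Finset.prod_div_distrib, Finset.prod_const, Finset.card_univ, Fintype.card_fin,
      ← Real.exp_sum, Finset.sum_add_distrib, Finset.sum_const, Finset.card_univ,
      Fintype.card_fin, nsmul_eq_mul]
    ring_nf
  -- main bound
  have hbound : ν (Qp ∩ T) ≤ C * P * volume T := by
    rw [hdens, withDensity_apply _ (hQpm.inter hTm)]
    calc ∫⁻ x in Qp ∩ T, ∏ i, gaussianPDF (c i) v (x i)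
        ≤ ∫⁻ _x in Qp ∩ T, C * P := by
          refine setLIntegral_mono' (hQpm.inter hTm) fun x hx => ?_
          have hxQ : x ∈ Qp := hx.1
          rw [hQp, Set.mem_univ_pi] at hxQ
          calc ∏ i, gaussianPDF (c i) v (x i)
              ≤ ∏ i, (ENNReal.ofReal (Real.exp ((k i : ℝ) + 3/2) / σ)
                  * μ i (Set.Icc ((k i : ℝ) * σ) ((k i + 1 : ℝ) * σ))) := by
                refine Finset.prod_le_prod' fun i _ => ?_
                exact oneDim_bound hσ (hc i) (k i) (hxQ i)
            _ = C * P := by rw [Finset.prod_mul_distrib, hCprod, hP]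
      _ = C * P * volume (Qp ∩ T) := by rw [setLIntegral_const]
      _ ≤ C * P * volume T := by
          exact mul_le_mul_right (measure_mono Set.inter_subset_right) _
  rw [hνQ]
  calc P⁻¹ * ν (Qp ∩ T) ≤ P⁻¹ * (C * P * volume T) := mul_le_mul_right hbound _
    _ = (P⁻¹ * P) * (C * volume T) := by ring_nf
    _ = C * volume S := by rw [ENNReal.inv_mul_cancel hP0 hPtop, one_mul, hvolS]
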